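/- Let A be an n×n matrix, B an n×m matrix, C an m×n matrix over a field F, and suppose B·C is invertible. Let M = [[A, B],[C, 0]]. Then: (1) M is invertible if and only if both B and C are invertible (in particular m = n); (2) i(M) ≤ 1, i.e., M is group invertible, and M^D = [[0, (BC)⁻¹·B],[C·(BC)⁻¹, −C·(BC)⁻¹·A·(BC)⁻¹·B]]. -/
import Mathlib


open Matrix Polynomial

/-- The Drazin index of a square matrix: the smallest natural number `k`
such that `rank (A ^ k) = rank (A ^ (k+1))`. -/
noncomputable def drazinIndex {n : Type*} [Fintype n] [DecidableEq n]
    {F : Type*} [Field F] (A : Matrix n n F) : ℕ :=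
  sInf {k : ℕ | (A ^ k).rank = (A ^ (k + 1)).rank}

/-- `X` is the Drazin inverse of `A`:
`A^(k+1) * X = A^k`, `X * A * X = X`, `A * X = X * A` with `k = drazinIndex A`. -/
def IsDrazinInverse {n : Type*} [Fintype n] [DecidableEq n]
    {F : Type*} [Field F] (A X : Matrix n n F) : Prop :=
  A ^ (drazinIndex A + 1) * X = A ^ drazinIndex A ∧ X * A * X = X ∧ A * X = X * A

/-- Uniqueness of the group inverse, in any monoid. -/
theorem group_inverse_unique_aux {R : Type*} [Monoid R] {a x y : R}
    (hx1 : a * a * x = a) (hx2 : x * a * x = x) (hx3 : a * x = x * a)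
    (hy1 : a * a * y = a) (hy2 : y * a * y = y) (hy3 : a * y = y * a) :
    x = y := by
  have hy' : a * (y * y) = y := by
    calc a * (y * y) = a * y * y := (mul_assoc _ _ _).symm
    _ = y * a * y := by rw [hy3]
    _ = y := hy2
  have hxaa : x * (a * a) = a := by
    calc x * (a * a) = x * a * a := (mul_assoc _ _ _).symm
    _ = a * x * a := by rw [← hx3]
    _ = a * (x * a) := mul_assoc _ _ _
    _ = a * (a * x) := by rw [hx3]
    _ = a * a * x := (mul_assoc _ _ _).symm
    _ = a := hx1
  have hxy : x * (a * y) = y := by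
    calc x * (a * y) = x * (a * (a * (y * y))) := by rw [hy']
    _ = x * (a * a * (y * y)) := by rw [← mul_assoc a a (y * y)]
    _ = x * (a * a) * (y * y) := by rw [← mul_assoc x (a * a) (y * y)]
    _ = a * (y * y) := by rw [hxaa]
    _ = y := hy'
  have hxx : x * x * a = x := by
    calc x * x * a = x * (x * a) := mul_assoc _ _ _
    _ = x * (a * x) := by rw [hx3]
    _ = x * a * x := (mul_assoc _ _ _).symm
    _ = x := hx2
  calc x = x * x * a := hxx.symm
  _ = x * x * (a * a * y) := by rw [hy1]
  _ = x * x * (a * a) * y := by rw [← mul_assoc (x * x) (a * a) y]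
  _ = x * (x * (a * a)) * y := by rw [mul_assoc x x (a * a)]
  _ = x * a * y := by rw [hxaa]
  _ = x * (a * y) := mul_assoc _ _ _
  _ = y := hxy

/-- with `BC` invertible and `M = [[A,B],[C,0]]`:
(1) `M` is invertible iff both `B` and `C` are invertible;
(2) `i(M) ≤ 1` and
`M^D = [[0, (BC)⁻¹ B],[C (BC)⁻¹, −C (BC)⁻¹ A (BC)⁻¹ B]]`. -/
theorem anti_triangular_BC_invertible {F : Type*} [Field F] {n m : ℕ}
    (A : Matrix (Fin n) (Fin n) F) (B : Matrix (Fin n) (Fin m) F)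
    (C : Matrix (Fin m) (Fin n) F)
    (hBC : IsUnit (B * C))
    (MD : Matrix (Fin n ⊕ Fin m) (Fin n ⊕ Fin m) F)
    (hMD : IsDrazinInverse (Matrix.fromBlocks A B C 0) MD) :
    (IsUnit (Matrix.fromBlocks A B C 0) ↔
      ((∃ B' : Matrix (Fin m) (Fin n) F, B * B' = 1 ∧ B' * B = 1) ∧
       (∃ C' : Matrix (Fin n) (Fin m) F, C * C' = 1 ∧ C' * C = 1))) ∧
    drazinIndex (Matrix.fromBlocks A B C 0) ≤ 1 ∧
    MD = Matrix.fromBlocks 0 ((B * C)⁻¹ * B) (C * (B * C)⁻¹)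
          (-(C * (B * C)⁻¹ * A * (B * C)⁻¹ * B)) := by
  set M : Matrix (Fin n ⊕ Fin m) (Fin n ⊕ Fin m) F := Matrix.fromBlocks A B C 0 with hM
  set K : Matrix (Fin n) (Fin n) F := (B * C)⁻¹ with hKdef
  have hdet : IsUnit (B * C).det := (Matrix.isUnit_iff_isUnit_det _).mp hBC
  have hK1 : B * C * K = 1 := Matrix.mul_nonsing_inv _ hdet
  have hK2 : K * (B * C) = 1 := Matrix.nonsing_inv_mul _ hdet
  set X : Matrix (Fin n ⊕ Fin m) (Fin n ⊕ Fin m) F :=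
    Matrix.fromBlocks 0 (K * B) (C * K) (-(C * K * A * K * B)) with hX
  have hK1' : B * (C * K) = 1 := by rw [← Matrix.mul_assoc, hK1]
  have e1 : ∀ (o : Type) (Y : Matrix (Fin n) o F), B * (C * (K * Y)) = Y := by
    intro o Y
    rw [← Matrix.mul_assoc, ← Matrix.mul_assoc, hK1, Matrix.one_mul]
  have e2 : ∀ (o : Type) (Y : Matrix (Fin n) o F), K * (B * (C * Y)) = Y := by
    intro o Y
    rw [← Matrix.mul_assoc, ← Matrix.mul_assoc, Matrix.mul_assoc K B C, hK2, Matrix.one_mul]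
  -- basic block computations
  have hMX : M * X = Matrix.fromBlocks 1 0 0 (C * K * B) := by
    rw [hM, hX]
    simp [Matrix.fromBlocks_multiply, Matrix.mul_assoc, Matrix.add_mul, Matrix.mul_add, e1, e2, hK1', hK2]
  have hXM : X * M = Matrix.fromBlocks 1 0 0 (C * K * B) := by
    rw [hM, hX]
    simp [Matrix.fromBlocks_multiply, Matrix.mul_assoc, Matrix.add_mul, Matrix.mul_add, e1, e2, hK1', hK2]
  have hMMX : M * M * X = M := by
    rw [hM, hX]
    simp [Matrix.fromBlocks_multiply, Matrix.mul_assoc, Matrix.add_mul, Matrix.mul_add, e1, e2, hK1', hK2]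
  have hXMX : X * M * X = X := by
    rw [hM, hX]
    simp [Matrix.fromBlocks_multiply, Matrix.mul_assoc, Matrix.add_mul, Matrix.mul_add, e1, e2, hK1', hK2]
  have hcomm : M * X = X * M := hMX.trans hXM.symm
  -- index ≤ 1
  have hrank : (M ^ 1).rank = (M ^ (1 + 1)).rank := by
    have h2 : M ^ (1 + 1) = M * M := sq M
    have hle1 : (M ^ (1 + 1)).rank ≤ (M ^ 1).rank := by
      rw [h2, pow_one]; exact Matrix.rank_mul_le_left M M
    have hle2 : (M ^ 1).rank ≤ (M ^ (1 + 1)).rank := by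
      conv_lhs => rw [pow_one, ← hMMX, ← h2]
      exact Matrix.rank_mul_le_left (M ^ (1 + 1)) X
    exact le_antisymm hle2 hle1
  have hidx : drazinIndex M ≤ 1 := Nat.sInf_le hrank
  -- from hMD get M * M * MD = M
  obtain ⟨hd1, hd2, hd3⟩ := hMD
  have hMMMD : M * M * MD = M := by
    interval_cases h : drazinIndex M
    · rw [pow_one, pow_zero] at hd1
      rw [Matrix.mul_assoc, hd1, Matrix.mul_one]
    · rw [pow_succ, pow_one] at hd1
      rw [hd1]
  -- uniqueness of the group inverse
  have hMDX : MD = X := group_inverse_unique_aux hMMMD hd2 hd3 hMMX hXMX hcomm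
  refine ⟨?_, hidx, hMDX⟩
  constructor
  · -- M invertible → B, C invertible
    intro hU
    obtain ⟨u, hu⟩ := hU
    have hN1 : M * (↑u⁻¹ : Matrix (Fin n ⊕ Fin m) (Fin n ⊕ Fin m) F) = 1 := by
      rw [← hu]; exact u.mul_inv
    have hN2 : (↑u⁻¹ : Matrix (Fin n ⊕ Fin m) (Fin n ⊕ Fin m) F) * M = 1 := by
      rw [← hu]; exact u.inv_mul
    set N : Matrix (Fin n ⊕ Fin m) (Fin n ⊕ Fin m) F := ↑u⁻¹ with hNdef
    -- extract blocks of N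
    have hNblocks : N = Matrix.fromBlocks N.toBlocks₁₁ N.toBlocks₁₂ N.toBlocks₂₁ N.toBlocks₂₂ :=
      (Matrix.fromBlocks_toBlocks N).symm
    set P := N.toBlocks₁₁; set Q := N.toBlocks₁₂; set R := N.toBlocks₂₁; set S := N.toBlocks₂₂
    have hNM : Matrix.fromBlocks (P * A + Q * C) (P * B + Q * (0 : Matrix (Fin m) (Fin m) F))
        (R * A + S * C) (R * B + S * (0 : Matrix (Fin m) (Fin m) F))
        = Matrix.fromBlocks 1 0 0 1 := by
      rw [← Matrix.fromBlocks_multiply, ← hNblocks, Matrix.fromBlocks_one, ← hM]; exact hN2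
    have hMN : Matrix.fromBlocks (A * P + B * R) (A * Q + B * S)
        (C * P + (0 : Matrix (Fin m) (Fin m) F) * R) (C * Q + (0 : Matrix (Fin m) (Fin m) F) * S)
        = Matrix.fromBlocks 1 0 0 1 := by
      rw [← Matrix.fromBlocks_multiply, ← hNblocks, Matrix.fromBlocks_one, ← hM]; exact hN1
    have hRB : R * B = 1 := by
      have := ((Matrix.fromBlocks_inj).mp hNM).2.2.2
      rwa [Matrix.mul_zero, add_zero] at this
    have hCQ : C * Q = 1 := by
      have := ((Matrix.fromBlocks_inj).mp hMN).2.2.2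
      rwa [Matrix.zero_mul, add_zero] at this
    have hBB' : B * (C * K) = 1 := by rw [← Matrix.mul_assoc, hK1]
    have hRCK : R = C * K := by
      calc R = R * (B * (C * K)) := by rw [hBB', Matrix.mul_one]
      _ = R * B * (C * K) := (Matrix.mul_assoc _ _ _).symm
      _ = C * K := by rw [hRB, Matrix.one_mul]
    have hC'C : K * B * C = 1 := by rw [Matrix.mul_assoc, hK2]
    have hQKB : Q = K * B := by
      calc Q = K * B * C * Q := by rw [hC'C, Matrix.one_mul]
      _ = K * B * (C * Q) := Matrix.mul_assoc _ _ _
      _ = K * B := by rw [hCQ, Matrix.mul_one]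
    exact ⟨⟨C * K, hBB', by rw [← hRCK, hRB]⟩, ⟨K * B, by rw [← hQKB, hCQ], hC'C⟩⟩
  · -- B, C invertible → M invertible
    rintro ⟨⟨B', hBB', hB'B⟩, ⟨C', hCC', hC'C⟩⟩
    set N : Matrix (Fin n ⊕ Fin m) (Fin n ⊕ Fin m) F :=
      Matrix.fromBlocks 0 C' B' (-(B' * A * C')) with hNdef
    have f1 : ∀ (o : Type) (Y : Matrix (Fin n) o F), B * (B' * Y) = Y := by
      intro o Y
      rw [← Matrix.mul_assoc, hBB', Matrix.one_mul]
    have hMN : M * N = 1 := by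
      rw [hM, hNdef, ← Matrix.fromBlocks_one]
      simp [Matrix.fromBlocks_multiply, Matrix.mul_assoc, f1, hBB', hCC', hC'C, hB'B]
    have hNM : N * M = 1 := by
      rw [hM, hNdef, ← Matrix.fromBlocks_one]
      simp [Matrix.fromBlocks_multiply, Matrix.mul_assoc, f1, hBB', hCC', hC'C, hB'B]
    exact ⟨⟨M, N, hMN, hNM⟩, rfl⟩
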